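/- G_FL is, up to isomorphism, the unique game G = (T, A) such that: T and A are at most countable; every finite game admits a game embedding into G; and G is ultrahomogeneous with respect to (emb, FinGame). In particular, any game G with these three properties is isomorphic to G_FL, and G_FL itself has them. -/

import Mathlib

universe u v w x y

namespace FraisseGames

/-- The initial segment (of length `n`) of an infinite sequence `R`. -/
def runPrefix {M : Type u} (R : ℕ → M) (n : ℕ) : List M :=
  (List.range n).map R

/-- `T` is a game tree over `M`: it is closed under initial segments, and every
moment of `T` has a one-step extension in `T`. -/
def IsGameTree {M : Type u} (T : Set (List M)) : Prop :=
  (∀ t ∈ T, ∀ k : ℕ, t.take k ∈ T) ∧ ∀ t ∈ T, ∃ x : M, t ++ [x] ∈ T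

/-- The set of runs of the tree `T`. -/
def Runs {M : Type u} (T : Set (List M)) : Set (ℕ → M) :=
  {R | ∀ n : ℕ, runPrefix R n ∈ T}

/-- A game over `M`: a game tree together with a payoff set of runs. -/
structure Game (M : Type u) : Type u where
  tree : Set (List M)
  isGameTree : IsGameTree tree
  payoff : Set (ℕ → M)
  payoff_subset : payoff ⊆ Runs tree

/-- A game is finite if its set of runs is finite. -/
def Game.IsFin {M : Type u} (G : Game M) : Prop := (Runs G.tree).Finite

/-- The subgame relation `G ≤ G'`. -/
def Game.Sub {M : Type u} (G G' : Game M) : Prop :=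
  G.tree ⊆ G'.tree ∧ G.payoff = G'.payoff ∩ Runs G.tree

/-- `f` is a chronological map from `T₁` to `T₂`: it maps `T₁` into `T₂` and it
preserves lengths and truncations of moments. -/
def Chronological {M₁ : Type u} {M₂ : Type v} (T₁ : Set (List M₁)) (T₂ : Set (List M₂))
    (f : List M₁ → List M₂) : Prop :=
  (∀ t ∈ T₁, f t ∈ T₂) ∧ (∀ t ∈ T₁, (f t).length = t.length) ∧
    ∀ t ∈ T₁, ∀ k : ℕ, f (t.take k) = (f t).take k

/-- `BarMapsTo f R S` says that the map `f̄` on runs induced by the chronological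
map `f` sends the run `R` to the run `S`, i.e. `S↾n = f (R↾n)` for all `n`. -/
def BarMapsTo {M₁ : Type u} {M₂ : Type v} (f : List M₁ → List M₂)
    (R : ℕ → M₁) (S : ℕ → M₂) : Prop :=
  ∀ n : ℕ, runPrefix S n = f (runPrefix R n)

/-- `f` is an A-morphism from `G₁` to `G₂`: a chronological map whose induced map on
runs sends runs won by Ali to runs won by Ali. -/
def IsAMorphism {M₁ : Type u} {M₂ : Type v} (G₁ : Game M₁) (G₂ : Game M₂)
    (f : List M₁ → List M₂) : Prop :=
  Chronological G₁.tree G₂.tree f ∧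
    ∀ R ∈ G₁.payoff, ∀ S : ℕ → M₂, BarMapsTo f R S → S ∈ G₂.payoff

/-- `f` is a game embedding from `G₁` to `G₂`: a chronological map, injective on the
tree, such that for every run `R` of `G₁`, `R ∈ A₁ ↔ f̄ R ∈ A₂`. -/
def IsGameEmbedding {M₁ : Type u} {M₂ : Type v} (G₁ : Game M₁) (G₂ : Game M₂)
    (f : List M₁ → List M₂) : Prop :=
  Chronological G₁.tree G₂.tree f ∧
    (∀ t ∈ G₁.tree, ∀ s ∈ G₁.tree, f t = f s → t = s) ∧
    ∀ R ∈ Runs G₁.tree, ∀ S : ℕ → M₂, BarMapsTo f R S → (R ∈ G₁.payoff ↔ S ∈ G₂.payoff)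

/-- `f` is an isomorphism of games from `G₁` onto `G₂`: a game embedding that is
surjective onto the tree of `G₂`. -/
def IsGameIso {M₁ : Type u} {M₂ : Type v} (G₁ : Game M₁) (G₂ : Game M₂)
    (f : List M₁ → List M₂) : Prop :=
  IsGameEmbedding G₁ G₂ f ∧ ∀ s ∈ G₂.tree, ∃ t ∈ G₁.tree, f t = s

/-- The set of eventually-zero infinite sequences of natural numbers. -/
def c00 : Set (ℕ → ℕ) := {R | ∃ N : ℕ, ∀ n ≥ N, R n = 0}

/-- The game `G_FL = (ω^{<ω}, c₀₀)`. -/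
def GFL : Game ℕ where
  tree := Set.univ
  isGameTree := ⟨fun _ _ _ => trivial, fun _ _ => ⟨0, trivial⟩⟩
  payoff := c00
  payoff_subset := fun _ _ _ => trivial

/-- A game `G` is ultrahomogeneous with respect to `(emb, FinGame)`: any two game
embeddings of a finite game into `G` differ by an automorphism of `G`. -/
def UltrahomFinGames.{u', w'} {N : Type w'} (G : Game N) : Prop :=
  ∀ (M : Type u') (H : Game M), H.IsFin →
    ∀ f g : List M → List N,
      IsGameEmbedding H G f → IsGameEmbedding H G g →
      ∃ φ : List N → List N, IsGameIso G G φ ∧ ∀ t ∈ H.tree, φ (f t) = g t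

/-! ### Basic lemmas on runPrefix -/

theorem runPrefix_length {M : Type u} (R : ℕ → M) (n : ℕ) : (runPrefix R n).length = n := by
  simp [runPrefix]

theorem runPrefix_zero {M : Type u} (R : ℕ → M) : runPrefix R 0 = [] := rfl

theorem runPrefix_succ {M : Type u} (R : ℕ → M) (n : ℕ) :
    runPrefix R (n + 1) = runPrefix R n ++ [R n] := by
  simp [runPrefix, List.range_succ]

theorem runPrefix_getElem {M : Type u} (R : ℕ → M) (n i : ℕ) (h : i < n) :
    (runPrefix R n)[i]'(by simpa [runPrefix_length]) = R i := by
  simp [runPrefix]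

theorem runPrefix_take {M : Type u} (R : ℕ → M) (n k : ℕ) (h : k ≤ n) :
    (runPrefix R n).take k = runPrefix R k := by
  apply List.ext_getElem
  · simp [runPrefix_length, h]
  · intro i h1 h2
    simp only [runPrefix_length, List.length_take] at h1 h2
    simp only [List.getElem_take]
    rw [runPrefix_getElem _ _ _ (by omega), runPrefix_getElem _ _ _ (by omega)]

theorem eq_of_runPrefix_eq {M : Type u} {R S : ℕ → M}
    (h : ∀ n, runPrefix R n = runPrefix S n) : R = S := by
  funext n
  have := h (n + 1)
  rw [runPrefix_succ, runPrefix_succ, h n] at this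
  simpa using (List.append_inj' this rfl).2

theorem runPrefix_mem_runs {M : Type u} {T : Set (List M)} {R : ℕ → M} (hR : R ∈ Runs T)
    (n : ℕ) : runPrefix R n ∈ T := hR n

/-- every list is the runPrefix of the sequence `getD · junk`. -/
theorem runPrefix_getD {M : Type u} (l : List M) (junk : M) :
    runPrefix (fun n => l.getD n junk) l.length = l := by
  apply List.ext_getElem
  · simp [runPrefix_length]
  · intro i h1 h2
    rw [runPrefix_getElem _ _ _ (by simpa [runPrefix_length] using h1)]
    exact List.getD_eq_getElem l junk h2

/-! ### Runs through a node -/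

theorem take_succ_getD {M : Type u} (l : List M) (junk : M) {n : ℕ} (h : n < l.length) :
    l.take (n + 1) = l.take n ++ [l.getD n junk] := by
  rw [List.take_succ, List.getD_eq_getElem l junk h, List.getElem?_eq_getElem h]; rfl

noncomputable def chainExt {M : Type u} {T : Set (List M)} (hT : IsGameTree T) (t : List M) (ht : t ∈ T) :
    ℕ → {l : List M // l ∈ T}
  | 0 => ⟨t, ht⟩
  | n + 1 =>
    ⟨(chainExt hT t ht n).1 ++ [Classical.choose (hT.2 _ (chainExt hT t ht n).2)],
      Classical.choose_spec (hT.2 _ (chainExt hT t ht n).2)⟩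

theorem chainExt_length {M : Type u} {T : Set (List M)} (hT : IsGameTree T) (t : List M)
    (ht : t ∈ T) (n : ℕ) : (chainExt hT t ht n).1.length = t.length + n := by
  induction n with
  | zero => rfl
  | succ n ih => show ((chainExt hT t ht n).1 ++ _).length = _; simp [ih]; omega

theorem exists_run_through {M : Type u} {T : Set (List M)} (hT : IsGameTree T)
    {t : List M} (ht : t ∈ T) : ∃ R ∈ Runs T, runPrefix R t.length = t := by
  set L := chainExt hT t ht with hL
  have hlen : ∀ n, (L n).1.length = t.length + n := chainExt_length hT t ht
  have hstep : ∀ n, (L (n+1)).1 = (L n).1 ++ [Classical.choose (hT.2 _ (L n).2)] :=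
    fun n => rfl
  have hjunk : M := Classical.choose (hT.2 t ht)
  set R : ℕ → M := fun n => (L (n+1)).1.getD n hjunk with hR
  have key : ∀ n, runPrefix R n = (L n).1.take n := by
    intro n; induction n with
    | zero => simp [runPrefix_zero]
    | succ n ih =>
      have hn1 : n < (L (n+1)).1.length := by rw [hlen (n+1)]; omega
      have e1 : (L (n+1)).1.take (n+1) = (L (n+1)).1.take n ++ [(L (n+1)).1.getD n hjunk] :=
        take_succ_getD _ hjunk hn1
      have e2 : (L (n+1)).1.take n = (L n).1.take n := by
        rw [hstep n, List.take_append_of_le_length (by rw [hlen n]; omega)]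
      rw [runPrefix_succ, ih, e1, e2]
  have hpre : ∀ n, (L n).1.take t.length = t := by
    intro n; induction n with
    | zero => exact List.take_of_length_le le_rfl
    | succ n ih =>
      rw [hstep n, List.take_append_of_le_length (by rw [hlen n]; omega), ih]
  refine ⟨R, fun n => ?_, ?_⟩
  · rw [key n]; exact hT.1 _ (L n).2 n
  · rw [key t.length, hpre t.length]


/-! ### Prefix trees of sets of runs -/

def treeOf {M : Type u} (F : Set (ℕ → M)) : Set (List M) :=
  {l | ∃ R ∈ F, runPrefix R l.length = l}

theorem runPrefix_mem_treeOf {M : Type u} {F : Set (ℕ → M)} {R : ℕ → M} (hR : R ∈ F) (n : ℕ) :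
    runPrefix R n ∈ treeOf F := ⟨R, hR, by rw [runPrefix_length]⟩

theorem treeOf_isGameTree {M : Type u} (F : Set (ℕ → M)) : IsGameTree (treeOf F) := by
  constructor
  · rintro t ⟨R, hR, ht⟩ k
    refine ⟨R, hR, ?_⟩
    rcases le_or_gt k t.length with h | h
    · have h2 : (t.take k).length = k := by
        rw [List.length_take]; omega
      rw [h2]
      conv_rhs => rw [← ht]
      rw [runPrefix_take _ _ _ h]
    · rw [List.take_of_length_le (le_of_lt h)]; exact ht
  · rintro t ⟨R, hR, ht⟩
    refine ⟨R t.length, R, hR, ?_⟩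
    have h2 : (t ++ [R t.length]).length = t.length + 1 := by simp
    rw [h2, runPrefix_succ, ht]

theorem treeOf_mono {M : Type u} {F F' : Set (ℕ → M)} (h : F ⊆ F') : treeOf F ⊆ treeOf F' := by
  rintro t ⟨R, hR, h1⟩; exact ⟨R, h hR, h1⟩

theorem subset_runs_treeOf {M : Type u} (F : Set (ℕ → M)) : F ⊆ Runs (treeOf F) :=
  fun R hR n => runPrefix_mem_treeOf hR n

theorem runs_treeOf {M : Type u} {F : Set (ℕ → M)} (hF : F.Finite) :
    Runs (treeOf F) = F := by
  refine Set.Subset.antisymm ?_ (subset_runs_treeOf F)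
  intro R hR
  by_contra hRF
  -- for each Q ∈ F pick a level where Q disagrees with R
  have hdis : ∀ Q ∈ F, ∃ n, runPrefix Q n ≠ runPrefix R n := by
    intro Q hQ
    by_contra hc
    push_neg at hc
    have : Q = R := eq_of_runPrefix_eq hc
    exact hRF (this ▸ hQ)
  classical
  choose ν hν using hdis
  have hFne : F.Nonempty := by
    rcases hR 1 with ⟨Q, hQ, -⟩; exact ⟨Q, hQ⟩
  obtain ⟨N, hN⟩ : ∃ N, ∀ Q (hQ : Q ∈ F), ν Q hQ ≤ N := by
    have : (hF.toFinset.attach.image (fun q => ν q.1 (hF.mem_toFinset.mp q.2))).max'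
        (by simp [Finset.image_nonempty, hF.mem_toFinset]; exact hFne) = _ := rfl
    refine ⟨(hF.toFinset.attach.image (fun q => ν q.1 (hF.mem_toFinset.mp q.2))).max'
      (by simp [Finset.image_nonempty, hF.mem_toFinset]; exact hFne), ?_⟩
    intro Q hQ
    apply Finset.le_max'
    exact Finset.mem_image.mpr ⟨⟨Q, hF.mem_toFinset.mpr hQ⟩, Finset.mem_attach _ _, rfl⟩
  rcases hR N with ⟨Q, hQ, hQR⟩
  rw [runPrefix_length] at hQR
  apply hν Q hQ
  have := hN Q hQ
  rw [← runPrefix_take Q N _ this, hQR, runPrefix_take R N _ this]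

theorem treeOf_countable {M : Type u} {F : Set (ℕ → M)} (hF : F.Countable) :
    (treeOf F).Countable := by
  have : treeOf F = ⋃ R ∈ F, Set.range (runPrefix R) := by
    ext l
    simp only [treeOf, Set.mem_iUnion, Set.mem_range, Set.mem_setOf_eq]
    constructor
    · rintro ⟨R, hR, h⟩; exact ⟨R, hR, l.length, h⟩
    · rintro ⟨R, hR, n, h⟩; exact ⟨R, hR, by rw [← h, runPrefix_length]⟩
  rw [this]
  exact hF.biUnion (fun R _ => Set.countable_range _)

theorem tree_eq_treeOf_runs {M : Type u} {T : Set (List M)} (hT : IsGameTree T) :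
    T = treeOf (Runs T) := by
  ext t
  constructor
  · intro ht
    rcases exists_run_through hT ht with ⟨R, hR, h⟩
    exact ⟨R, hR, h⟩
  · rintro ⟨R, hR, h⟩
    rw [← h]; exact hR _

/-- The finite subgame of `G` spanned by a set of runs `F`. -/
def gameOf {M : Type u} (G : Game M) (F : Set (ℕ → M)) : Game M where
  tree := treeOf F
  isGameTree := treeOf_isGameTree F
  payoff := G.payoff ∩ Runs (treeOf F)
  payoff_subset := Set.inter_subset_right

theorem gameOf_isFin {M : Type u} (G : Game M) {F : Set (ℕ → M)} (hF : F.Finite) :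
    (gameOf G F).IsFin := by
  show (Runs (treeOf F)).Finite
  rw [runs_treeOf hF]; exact hF

theorem gameOf_sub {M : Type u} (G : Game M) {F : Set (ℕ → M)} (hF : F ⊆ Runs G.tree) :
    (gameOf G F).Sub G := by
  constructor
  · rintro t ⟨R, hR, h⟩
    rw [← h]; exact hF hR _
  · rfl

theorem gameOf_mono_sub {M : Type u} (G : Game M) {F F' : Set (ℕ → M)} (h : F ⊆ F') :
    (gameOf G F).Sub (gameOf G F') := by
  refine ⟨treeOf_mono h, ?_⟩
  show G.payoff ∩ Runs (treeOf F) = (G.payoff ∩ Runs (treeOf F')) ∩ Runs (treeOf F)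
  apply Set.Subset.antisymm
  · intro R hR
    exact ⟨⟨hR.1, fun n => treeOf_mono h (hR.2 n)⟩, hR.2⟩
  · intro R hR
    exact ⟨hR.1.1, hR.2⟩


/-! ### Embedding toolkit -/

theorem barMapsTo_unique {M₁ : Type u} {M₂ : Type v} {f : List M₁ → List M₂}
    {R : ℕ → M₁} {S S' : ℕ → M₂} (h : BarMapsTo f R S) (h' : BarMapsTo f R S') : S = S' :=
  eq_of_runPrefix_eq (fun n => (h n).trans (h' n).symm)

/-- A canonical choice for `f̄ R`, assuming `M₂` nonempty via a junk element. -/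
noncomputable def barImage {M₁ : Type u} {M₂ : Type v} [Nonempty M₂]
    (f : List M₁ → List M₂) (R : ℕ → M₁) : ℕ → M₂ :=
  fun n => (f (runPrefix R (n + 1))).getD n (Classical.arbitrary M₂)

theorem barImage_barMapsTo {M₁ : Type u} {M₂ : Type v} [Nonempty M₂] {T₁ : Set (List M₁)}
    {T₂ : Set (List M₂)} {f : List M₁ → List M₂} (hf : Chronological T₁ T₂ f)
    {R : ℕ → M₁} (hR : R ∈ Runs T₁) : BarMapsTo f R (barImage f R) := by
  intro n
  induction n with
  | zero =>
    have h0 : runPrefix R 0 ∈ T₁ := hR 0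
    have := hf.2.1 _ h0
    rw [runPrefix_zero] at this ⊢
    exact (List.length_eq_zero_iff.mp this).symm
  | succ n ih =>
    have hmem : runPrefix R (n + 1) ∈ T₁ := hR (n + 1)
    have hlen : (f (runPrefix R (n + 1))).length = n + 1 := by
      rw [hf.2.1 _ hmem, runPrefix_length]
    have htake : (f (runPrefix R (n + 1))).take n = f (runPrefix R n) := by
      rw [← hf.2.2 _ hmem n, runPrefix_take _ _ _ (by omega)]
    rw [runPrefix_succ, ih]
    have := take_succ_getD (f (runPrefix R (n + 1))) (Classical.arbitrary M₂)
      (n := n) (by omega)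
    rw [List.take_of_length_le (by omega)] at this
    rw [this, htake]
    rfl

theorem barMapsTo_mem_runs {M₁ : Type u} {M₂ : Type v} {T₁ : Set (List M₁)}
    {T₂ : Set (List M₂)} {f : List M₁ → List M₂} (hf : Chronological T₁ T₂ f)
    {R : ℕ → M₁} (hR : R ∈ Runs T₁) {S : ℕ → M₂} (hS : BarMapsTo f R S) : S ∈ Runs T₂ := by
  intro n
  rw [hS n]
  exact hf.1 _ (hR n)

/-- composition of game embeddings -/
theorem IsGameEmbedding.comp {M₁ : Type u} {M₂ : Type v} {M₃ : Type w}
    {G₁ : Game M₁} {G₂ : Game M₂} {G₃ : Game M₃}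
    {a : List M₁ → List M₂} {b : List M₂ → List M₃}
    (ha : IsGameEmbedding G₁ G₂ a) (hb : IsGameEmbedding G₂ G₃ b) :
    IsGameEmbedding G₁ G₃ (fun l => b (a l)) := by
  obtain ⟨hac, hai, hap⟩ := ha
  obtain ⟨hbc, hbi, hbp⟩ := hb
  refine ⟨⟨fun t ht => hbc.1 _ (hac.1 _ ht), fun t ht => by rw [hbc.2.1 _ (hac.1 _ ht), hac.2.1 _ ht],
      fun t ht k => by show b (a (t.take k)) = (b (a t)).take k; rw [hac.2.2 _ ht k, hbc.2.2 _ (hac.1 _ ht) k]⟩, ?_, ?_⟩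
  · intro t ht s hs h
    exact hai _ ht _ hs (hbi _ (hac.1 _ ht) _ (hac.1 _ hs) h)
  · intro R hR S hS
    haveI : Nonempty M₂ := by
      rcases G₂.isGameTree.2 _ (hac.1 _ (hR 0)) with ⟨x, -⟩
      exact ⟨x⟩
    have hmid : BarMapsTo a R (barImage a R) := barImage_barMapsTo hac hR
    have hmidruns : barImage a R ∈ Runs G₂.tree := barMapsTo_mem_runs hac hR hmid
    have hbm : BarMapsTo b (barImage a R) S := by
      intro n
      rw [hS n, hmid n]
    exact (hap R hR _ hmid).trans (hbp _ hmidruns S hbm)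


/-- If `H' ≤ H` then any embedding of `H` restricts to an embedding of `H'`. -/
theorem emb_of_sub_left {M₁ : Type u} {M₂ : Type v} {H' H : Game M₁} {G₂ : Game M₂}
    {e : List M₁ → List M₂} (hsub : H'.Sub H) (he : IsGameEmbedding H G₂ e) :
    IsGameEmbedding H' G₂ e := by
  obtain ⟨hc, hi, hp⟩ := he
  refine ⟨⟨fun t ht => hc.1 _ (hsub.1 ht), fun t ht => hc.2.1 _ (hsub.1 ht),
      fun t ht k => hc.2.2 _ (hsub.1 ht) k⟩, fun t ht s hs h => hi _ (hsub.1 ht) _ (hsub.1 hs) h,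
      ?_⟩
  intro R hR S hS
  have hR' : R ∈ Runs H.tree := fun n => hsub.1 (hR n)
  rw [hsub.2]
  constructor
  · rintro ⟨h1, -⟩; exact (hp R hR' S hS).mp h1
  · intro h1; exact ⟨(hp R hR' S hS).mpr h1, hR⟩

/-- If `H ≤ G₂` then an embedding into `H` is an embedding into `G₂`. -/
theorem emb_of_sub_right {M₁ : Type u} {M₂ : Type v} {H₀ : Game M₁} {H G₂ : Game M₂}
    {e : List M₁ → List M₂} (hsub : H.Sub G₂) (he : IsGameEmbedding H₀ H e) :
    IsGameEmbedding H₀ G₂ e := by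
  obtain ⟨hc, hi, hp⟩ := he
  refine ⟨⟨fun t ht => hsub.1 (hc.1 _ ht), hc.2.1, hc.2.2⟩, hi, ?_⟩
  intro R hR S hS
  have hS' : S ∈ Runs H.tree := barMapsTo_mem_runs hc hR hS
  rw [hp R hR S hS, hsub.2]
  exact ⟨fun h => h.1, fun h => ⟨h, hS'⟩⟩

/-- Corestriction: an embedding of a finite game `H` into `G₂` is an isomorphism onto
the subgame of `G₂` spanned by the images of the runs of `H`. -/
theorem corestrict {M₁ : Type u} {M₂ : Type v} [Nonempty M₂] {H : Game M₁} {G₂ : Game M₂}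
    {e : List M₁ → List M₂} (he : IsGameEmbedding H G₂ e) :
    IsGameIso H (gameOf G₂ (barImage e '' Runs H.tree)) e := by
  obtain ⟨hc, hi, hp⟩ := he
  have htree : ∀ t ∈ H.tree, e t ∈ treeOf (barImage e '' Runs H.tree) := by
    intro t ht
    rcases exists_run_through H.isGameTree ht with ⟨R, hR, hRt⟩
    have hb : BarMapsTo e R (barImage e R) := barImage_barMapsTo hc hR
    refine ⟨barImage e R, ⟨R, hR, rfl⟩, ?_⟩
    rw [hc.2.1 _ ht]
    conv_rhs => rw [← hRt]
    exact hb t.length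
  refine ⟨⟨⟨htree, hc.2.1, hc.2.2⟩, hi, ?_⟩, ?_⟩
  · intro R hR S hS
    rw [hp R hR S hS]
    have hSeq : S = barImage e R := barMapsTo_unique hS (barImage_barMapsTo hc hR)
    have hSmem : S ∈ Runs (treeOf (barImage e '' Runs H.tree)) := by
      rw [hSeq]
      exact subset_runs_treeOf _ ⟨R, hR, rfl⟩ 
    exact ⟨fun h => ⟨h, hSmem⟩, fun h => h.1⟩
  · rintro s ⟨S, ⟨R, hR, rfl⟩, hs⟩
    refine ⟨runPrefix R s.length, hR s.length, ?_⟩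
    rw [← barImage_barMapsTo hc hR s.length, hs]

/-- Inverse of a game isomorphism. -/
theorem iso_inv {M₁ : Type u} {M₂ : Type v} {G₁ : Game M₁} {G₂ : Game M₂}
    {f : List M₁ → List M₂} (hf : IsGameIso G₁ G₂ f) :
    ∃ ψ : List M₂ → List M₁, IsGameIso G₂ G₁ ψ ∧ (∀ t ∈ G₁.tree, ψ (f t) = t) ∧
      (∀ s ∈ G₂.tree, f (ψ s) = s) := by
  classical
  obtain ⟨⟨hc, hi, hp⟩, hsurj⟩ := hf
  set ψ : List M₂ → List M₁ := fun s =>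
    if h : ∃ t ∈ G₁.tree, f t = s then h.choose else [] with hψ
  have hψf : ∀ t ∈ G₁.tree, ψ (f t) = t := by
    intro t ht
    have h : ∃ t' ∈ G₁.tree, f t' = f t := ⟨t, ht, rfl⟩
    rw [hψ]
    simp only [dif_pos h]
    exact hi _ h.choose_spec.1 _ ht h.choose_spec.2
  have hfψ : ∀ s ∈ G₂.tree, f (ψ s) = s := by
    intro s hs
    rcases hsurj s hs with ⟨t, ht, rfl⟩
    rw [hψf t ht]
  have hψmem : ∀ s ∈ G₂.tree, ψ s ∈ G₁.tree := by
    intro s hs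
    rcases hsurj s hs with ⟨t, ht, rfl⟩
    rw [hψf t ht]; exact ht
  have hchrono : Chronological G₂.tree G₁.tree ψ := by
    refine ⟨hψmem, ?_, ?_⟩
    · intro s hs
      rcases hsurj s hs with ⟨t, ht, rfl⟩
      rw [hψf t ht, hc.2.1 _ ht]
    · intro s hs k
      rcases hsurj s hs with ⟨t, ht, rfl⟩
      rw [hψf t ht, ← hc.2.2 _ ht k, hψf _ (G₁.isGameTree.1 _ ht k)]
  refine ⟨ψ, ⟨⟨hchrono, ?_, ?_⟩, ?_⟩, hψf, hfψ⟩
  · intro s hs s' hs' h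
    rw [← hfψ s hs, ← hfψ s' hs', h]
  · intro S hS R hR
    have hRruns : R ∈ Runs G₁.tree := barMapsTo_mem_runs hchrono hS hR
    have hfR : BarMapsTo f R S := by
      intro n
      rw [← hfψ _ (hS n), ← hR n]
    exact (hp R hRruns S hfR).symm
  · intro t ht
    exact ⟨f t, hc.1 _ ht, hψf t ht⟩


/-! ### Universality of GFL -/

theorem runs_sep_level {M : Type x} {H : Game M} (hfin : H.IsFin) :
    ∃ L : ℕ, ∀ Q ∈ Runs H.tree, ∀ Q' ∈ Runs H.tree,
      runPrefix Q L = runPrefix Q' L → Q = Q' := by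
  classical
  have hdiff : ∀ Q Q' : ℕ → M, Q ≠ Q' → ∃ n, runPrefix Q n ≠ runPrefix Q' n := by
    intro Q Q' h
    by_contra hc
    push_neg at hc
    exact h (eq_of_runPrefix_eq hc)
  set d : (ℕ → M) → (ℕ → M) → ℕ := fun Q Q' =>
    if h : Q ≠ Q' then (hdiff Q Q' h).choose else 0 with hd
  set s := hfin.toFinset
  refine ⟨s.sup (fun Q => s.sup (fun Q' => d Q Q')), ?_⟩
  intro Q hQ Q' hQ' hpre
  by_contra hne
  have hdQ := (hdiff Q Q' hne).choose_spec
  have hle1 : d Q Q' ≤ s.sup (fun Q'' => d Q Q'') :=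
    Finset.le_sup (f := fun Q'' => d Q Q'') (hfin.mem_toFinset.mpr hQ')
  have hle2 : s.sup (fun Q'' => d Q Q'') ≤ s.sup (fun Qa => s.sup (fun Q'' => d Qa Q'')) :=
    Finset.le_sup (f := fun Qa => s.sup (fun Q'' => d Qa Q'')) (hfin.mem_toFinset.mpr hQ)
  have hle : d Q Q' ≤ s.sup (fun Q => s.sup (fun Q' => d Q Q')) := le_trans hle1 hle2
  apply hdQ
  have h2 : d Q Q' = (hdiff Q Q' hne).choose := by rw [hd]; simp [hne]
  rw [← h2, ← runPrefix_take Q _ _ hle, ← runPrefix_take Q' _ _ hle, hpre]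

theorem GFL_universal {M : Type x} (H : Game M) (hfin : H.IsFin) :
    ∃ f : List M → List ℕ, IsGameEmbedding H GFL f := by
  classical
  have htc : H.tree.Countable := by
    rw [tree_eq_treeOf_runs H.isGameTree]
    exact treeOf_countable hfin.countable
  obtain ⟨j, hj⟩ := Set.countable_iff_exists_injective.mp htc
  set J : List M → ℕ := fun l => if h : l ∈ H.tree then j ⟨l, h⟩ else 0 with hJ
  obtain ⟨L, hL⟩ := runs_sep_level hfin
  set c : List M → ℕ := fun l =>
    if (L + 2 ≤ l.length ∧ ∃ Q ∈ H.payoff, runPrefix Q l.length = l) then 0 else J l + 1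
    with hcdef
  set f : List M → List ℕ := fun t => (List.range t.length).map (fun k => c (t.take (k + 1)))
    with hfdef
  have hflen : ∀ t : List M, (f t).length = t.length := by intro t; simp [hfdef]
  have hfget : ∀ (t : List M) (i : ℕ) (h : i < t.length),
      (f t)[i]'(by rw [hflen]; exact h) = c (t.take (i + 1)) := by
    intro t i h; simp [hfdef]
  have hftake : ∀ (t : List M) (k : ℕ), f (t.take k) = (f t).take k := by
    intro t k
    apply List.ext_getElem
    · simp [hflen]
    · intro i h1 h2
      rw [List.getElem_take]
      have h1' : i < (t.take k).length := by rw [← hflen]; exact h1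
      have h2' : i < t.length := by simp [List.length_take] at h1'; omega
      have hik : i < k := by simp [List.length_take] at h1'; omega
      rw [hfget _ _ h1', hfget _ _ h2']
      congr 1
      rw [List.take_take]
      congr 1
      omega
  -- key: the value of S along a barMapsTo image
  have hSval : ∀ (R : ℕ → M) (S : ℕ → ℕ), BarMapsTo f R S →
      ∀ n, S n = c (runPrefix R (n + 1)) := by
    intro R S hS n
    have h1 := hS (n + 1)
    have hn : n < (runPrefix S (n+1)).length := by rw [runPrefix_length]; omega
    have hn2 : n < (runPrefix R (n+1)).length := by rw [runPrefix_length]; omega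
    have key := congrArg (fun l : List ℕ => l.getD n 0) h1
    rw [List.getD_eq_getElem _ _ hn, runPrefix_getElem S (n+1) n (by omega),
      List.getD_eq_getElem _ _ (by rw [hflen, runPrefix_length]; omega)] at key
    rw [key, hfget _ _ hn2, List.take_of_length_le (by rw [runPrefix_length])]
  refine ⟨f, ⟨fun _ _ => trivial, fun t _ => hflen t, fun t _ k => hftake t k⟩, ?_, ?_⟩
  · -- injectivity on tree
    intro t ht st hst h
    have hlen : t.length = st.length := by rw [← hflen t, ← hflen st, h]
    have hkey : ∀ n, t.take n = st.take n := by
      intro n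
      induction n with
      | zero => simp
      | succ n ih =>
        rcases le_or_gt t.length n with hn | hn
        · rw [List.take_of_length_le (by omega), List.take_of_length_le (by omega)]
          rw [List.take_of_length_le (by omega), List.take_of_length_le (by omega)] at ih
          exact ih
        · have hceq : c (t.take (n + 1)) = c (st.take (n + 1)) := by
            rw [← hfget t n hn, ← hfget st n (by omega)]
            congr 1
          have hmemt : t.take (n + 1) ∈ H.tree := H.isGameTree.1 t ht (n + 1)
          have hmems : st.take (n + 1) ∈ H.tree := H.isGameTree.1 st hst (n + 1)
          have hlent : (t.take (n+1)).length = n + 1 := by rw [List.length_take]; omega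
          have hlens : (st.take (n+1)).length = n + 1 := by rw [List.length_take]; omega
          rw [hcdef] at hceq
          simp only at hceq
          by_cases h1 : L + 2 ≤ (t.take (n+1)).length ∧
              ∃ Q ∈ H.payoff, runPrefix Q (t.take (n+1)).length = t.take (n+1)
          · by_cases h2 : L + 2 ≤ (st.take (n+1)).length ∧
                ∃ Q ∈ H.payoff, runPrefix Q (st.take (n+1)).length = st.take (n+1)
            · obtain ⟨hLn, Q, hQ, hQt⟩ := h1
              obtain ⟨-, Q', hQ', hQt'⟩ := h2
              rw [hlent] at hQt
              rw [hlens] at hQt'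
              have hLn' : L ≤ n := by rw [hlent] at hLn; omega
              have hQQ' : Q = Q' := by
                apply hL Q (H.payoff_subset hQ) Q' (H.payoff_subset hQ')
                have h5 : runPrefix Q L = List.take L t := by
                  rw [← runPrefix_take Q (n+1) L (by omega), hQt, List.take_take]
                  congr 1; omega
                have h6 : runPrefix Q' L = List.take L st := by
                  rw [← runPrefix_take Q' (n+1) L (by omega), hQt', List.take_take]
                  congr 1; omega
                rw [h5, h6]
                calc List.take L t = List.take L (List.take n t) := by
                      rw [List.take_take]; congr 1; omega
                  _ = List.take L (List.take n st) := by rw [ih]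
                  _ = List.take L st := by rw [List.take_take]; congr 1; omega
              rw [← hQt, ← hQt', hQQ']
            · rw [if_pos h1, if_neg h2] at hceq
              omega
          · by_cases h2 : L + 2 ≤ (st.take (n+1)).length ∧
                ∃ Q ∈ H.payoff, runPrefix Q (st.take (n+1)).length = st.take (n+1)
            · rw [if_neg h1, if_pos h2] at hceq
              omega
            · rw [if_neg h1, if_neg h2] at hceq
              have hJeq : J (t.take (n+1)) = J (st.take (n+1)) := by omega
              rw [hJ] at hJeq
              simp only [dif_pos hmemt, dif_pos hmems] at hJeq
              have := hj hJeq
              exact congrArg Subtype.val this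
    rw [← List.take_of_length_le (le_refl t.length), hkey t.length,
      List.take_of_length_le (by omega)]
  · -- payoff condition
    intro R hR S hS
    have hval := hSval R S hS
    constructor
    · intro hRp
      refine ⟨L + 1, fun n hn => ?_⟩
      rw [hval n, hcdef]
      simp only
      rw [if_pos]
      exact ⟨by rw [runPrefix_length]; omega, R, hRp, by rw [runPrefix_length]⟩
    · rintro ⟨N, hN⟩
      set n := max N (L + 1) with hn
      have h0 : S n = 0 := hN n (le_max_left _ _)
      rw [hval n, hcdef] at h0
      simp only at h0
      by_cases h1 : L + 2 ≤ (runPrefix R (n+1)).length ∧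
          ∃ Q ∈ H.payoff, runPrefix Q (runPrefix R (n+1)).length = runPrefix R (n+1)
      · obtain ⟨-, Q, hQ, hQR⟩ := h1
        rw [runPrefix_length] at hQR
        have : Q = R := by
          apply hL Q (H.payoff_subset hQ) R hR
          rw [← runPrefix_take Q (n+1) L (by omega), ← runPrefix_take R (n+1) L (by omega), hQR]
        exact this ▸ hQ
      · rw [if_neg h1] at h0
        omega


/-! ### Permutation extension and level-wise maps -/

theorem permExtend {A B : Set ℕ} (hA : A.Finite) (hB : B.Finite) {m : ℕ → ℕ}
    (hm : Set.BijOn m A B) : ∃ π : Equiv.Perm ℕ, ∀ x ∈ A, π x = m x := by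
  classical
  have hAc : (Aᶜ : Set ℕ).Infinite := hA.infinite_compl
  have hBc : (Bᶜ : Set ℕ).Infinite := hB.infinite_compl
  haveI i1 : Infinite (Aᶜ : Set ℕ) := hAc.to_subtype
  haveI i2 : Infinite (Bᶜ : Set ℕ) := hBc.to_subtype
  have e1 : Nonempty ((Aᶜ : Set ℕ) ≃ (Bᶜ : Set ℕ)) := by
    have : Nonempty ((Aᶜ : Set ℕ) ≃ ℕ) := nonempty_equiv_of_countable
    have h2 : Nonempty ((Bᶜ : Set ℕ) ≃ ℕ) := nonempty_equiv_of_countable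
    exact ⟨this.some.trans h2.some.symm⟩
  set eq1 : A ≃ B := hm.equiv m
  set π : ℕ ≃ ℕ :=
    (Equiv.Set.sumCompl A).symm.trans ((eq1.sumCongr e1.some).trans (Equiv.Set.sumCompl B))
  refine ⟨π, fun x hx => ?_⟩
  show (Equiv.Set.sumCompl B) ((eq1.sumCongr e1.some) ((Equiv.Set.sumCompl A).symm x)) = m x
  rw [Equiv.Set.sumCompl_symm_apply_of_mem hx]
  rfl

def phiAux (π : List ℕ → Equiv.Perm ℕ) : List ℕ → List ℕ
  | [] => []
  | x :: r => phiAux π r ++ [π r.reverse x]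

def phiOf (π : List ℕ → Equiv.Perm ℕ) (l : List ℕ) : List ℕ := phiAux π l.reverse

theorem phiOf_nil (π : List ℕ → Equiv.Perm ℕ) : phiOf π [] = [] := rfl

theorem phiOf_concat (π : List ℕ → Equiv.Perm ℕ) (t : List ℕ) (x : ℕ) :
    phiOf π (t ++ [x]) = phiOf π t ++ [π t x] := by
  show phiAux π (t ++ [x]).reverse = _
  rw [List.reverse_append]
  show phiAux π (x :: t.reverse) = _
  show phiAux π t.reverse ++ [π t.reverse.reverse x] = _
  rw [List.reverse_reverse]
  rfl

theorem phiOf_length (π : List ℕ → Equiv.Perm ℕ) (t : List ℕ) :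
    (phiOf π t).length = t.length := by
  induction t using List.reverseRecOn with
  | nil => rfl
  | append_singleton t x ih => rw [phiOf_concat]; simp [ih]

theorem phiOf_take (π : List ℕ → Equiv.Perm ℕ) (t : List ℕ) (k : ℕ) :
    phiOf π (t.take k) = (phiOf π t).take k := by
  induction t using List.reverseRecOn generalizing k with
  | nil => simp [phiOf_nil]
  | append_singleton t x ih =>
    rcases le_or_gt k t.length with h | h
    · rw [List.take_append_of_le_length h, phiOf_concat,
        List.take_append_of_le_length (by rw [phiOf_length]; exact h), ih]
    · rw [List.take_of_length_le (by simp; omega), phiOf_concat,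
        List.take_of_length_le (by simp [phiOf_length]; omega)]

theorem phiOf_injAux (π : List ℕ → Equiv.Perm ℕ) :
    ∀ (n : ℕ) (t s : List ℕ), t.length = n → s.length = n → phiOf π t = phiOf π s → t = s := by
  intro n
  induction n with
  | zero =>
    intro t s ht hs _
    rw [List.length_eq_zero_iff.mp ht, List.length_eq_zero_iff.mp hs]
  | succ n ihn =>
    intro t s ht hs h
    rcases List.eq_nil_or_concat t with rfl | ⟨t', x, rfl⟩
    · simp at ht
    rcases List.eq_nil_or_concat s with rfl | ⟨s', y, rfl⟩
    · simp at hs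
    simp only [List.concat_eq_append] at *
    rw [phiOf_concat, phiOf_concat] at h
    obtain ⟨h1, h2⟩ := List.append_inj' h rfl
    simp only [List.length_append, List.length_singleton] at ht hs
    have hts : t' = s' := ihn t' s' (by omega) (by omega) h1
    subst hts
    simp only [List.cons.injEq] at h2
    rw [(π t').injective h2.1]

theorem phiOf_injective (π : List ℕ → Equiv.Perm ℕ) : Function.Injective (phiOf π) := by
  intro t s h
  have hlen : t.length = s.length := by rw [← phiOf_length π t, ← phiOf_length π s, h]
  exact phiOf_injAux π s.length t s hlen rfl h

theorem phiOf_surjective (π : List ℕ → Equiv.Perm ℕ) : Function.Surjective (phiOf π) := by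
  intro s
  induction s using List.reverseRecOn with
  | nil => exact ⟨[], rfl⟩
  | append_singleton s y ih =>
    obtain ⟨t, rfl⟩ := ih
    exact ⟨t ++ [(π t).symm y], by rw [phiOf_concat, Equiv.apply_symm_apply]⟩



/-! ### Ultrahomogeneity of GFL -/

theorem getD_concat (l : List ℕ) (y : ℕ) : (l ++ [y]).getD l.length 0 = y := by
  simp [List.getD_append_right, List.getD]

theorem GFL_ultrahom {M : Type x} (H : Game M) (hfin : H.IsFin)
    (f g : List M → List ℕ) (hf : IsGameEmbedding H GFL f) (hg : IsGameEmbedding H GFL g) :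
    ∃ φ : List ℕ → List ℕ, IsGameIso GFL GFL φ ∧ ∀ t ∈ H.tree, φ (f t) = g t := by
  classical
  obtain ⟨hfc, hfi, hfp⟩ := hf
  obtain ⟨hgc, hgi, hgp⟩ := hg
  set Tf : Set (List ℕ) := f '' H.tree with hTf
  set pre : List ℕ → List M := fun s => if h : ∃ a ∈ H.tree, f a = s then h.choose else []
    with hpredef
  have pre_mem : ∀ s ∈ Tf, pre s ∈ H.tree ∧ f (pre s) = s := by
    rintro s ⟨a, ha, rfl⟩
    have h : ∃ a' ∈ H.tree, f a' = f a := ⟨a, ha, rfl⟩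
    rw [hpredef]
    simp only [dif_pos h]
    exact ⟨h.choose_spec.1, h.choose_spec.2⟩
  have pre_f : ∀ a ∈ H.tree, pre (f a) = a := by
    intro a ha
    have h := pre_mem (f a) ⟨a, ha, rfl⟩
    exact hfi _ h.1 _ ha h.2
  have pre_len : ∀ s ∈ Tf, (pre s).length = s.length := by
    intro s hs
    have h := hfc.2.1 _ (pre_mem s hs).1
    rw [(pre_mem s hs).2] at h
    exact h.symm
  set mt : List ℕ → ℕ → ℕ := fun t x =>
    if t ++ [x] ∈ Tf then (g (pre (t ++ [x]))).getD t.length 0 else x with hmtdef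
  set Cf : List ℕ → Set ℕ := fun t => {x | t ++ [x] ∈ Tf} with hCfdef
  set Cg : List ℕ → Set ℕ := fun t => {y | g (pre t) ++ [y] ∈ g '' H.tree} with hCgdef
  have mt_val : ∀ (t : List ℕ) (x : ℕ), t ++ [x] ∈ Tf →
      mt t x = (g (pre (t ++ [x]))).getD t.length 0 := by
    intro t x h; rw [hmtdef]; simp only [if_pos h]
  -- facts about one-step extensions inside Tf
  have ext_fact : ∀ t ∈ Tf, ∀ x ∈ Cf t,
      pre (t ++ [x]) ∈ H.tree ∧ f (pre (t ++ [x])) = t ++ [x] ∧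
      (pre (t ++ [x])).length = t.length + 1 ∧ (pre (t ++ [x])).take t.length = pre t ∧
      g (pre (t ++ [x])) = g (pre t) ++ [mt t x] := by
    intro t ht x hx
    have hb := pre_mem _ hx
    set b := pre (t ++ [x]) with hbdef
    have hblen : b.length = t.length + 1 := by
      rw [pre_len _ hx]; simp
    have hbtake : b.take t.length = pre t := by
      apply hfi _ (H.isGameTree.1 _ hb.1 t.length) _ (pre_mem t ht).1
      rw [hfc.2.2 _ hb.1 t.length, hb.2, (pre_mem t ht).2,
        List.take_append_of_le_length le_rfl, List.take_of_length_le le_rfl]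
    refine ⟨hb.1, hb.2, hblen, hbtake, ?_⟩
    have hg1 : (g b).length = t.length + 1 := by rw [hgc.2.1 _ hb.1, hblen]
    have hg2 : (g b).take t.length = g (pre t) := by
      rw [← hgc.2.2 _ hb.1 t.length, hbtake]
    have hform := take_succ_getD (g b) 0 (n := t.length) (by omega)
    rw [List.take_of_length_le (by omega), hg2] at hform
    rw [mt_val t x hx]
    exact hform
  have mt_bij : ∀ t ∈ Tf, Set.BijOn (mt t) (Cf t) (Cg t) := by
    intro t ht
    refine ⟨?_, ?_, ?_⟩
    · intro x hx
      obtain ⟨hb1, hb2, hb3, hb4, hb5⟩ := ext_fact t ht x hx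
      show g (pre t) ++ [mt t x] ∈ g '' H.tree
      rw [← hb5]
      exact ⟨_, hb1, rfl⟩
    · intro x hx x' hx' hxx
      obtain ⟨hb1, hb2, hb3, hb4, hb5⟩ := ext_fact t ht x hx
      obtain ⟨hc1, hc2, hc3, hc4, hc5⟩ := ext_fact t ht x' hx'
      have : g (pre (t ++ [x])) = g (pre (t ++ [x'])) := by rw [hb5, hc5, hxx]
      have hbc : pre (t ++ [x]) = pre (t ++ [x']) := hgi _ hb1 _ hc1 this
      have : t ++ [x] = t ++ [x'] := by rw [← hb2, ← hc2, hbc]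
      simpa using this
    · intro y hy
      obtain ⟨c, hc, hgc'⟩ := hy
      have hclen : c.length = t.length + 1 := by
        have : (g c).length = c.length := hgc.2.1 _ hc
        rw [hgc', List.length_append, List.length_singleton,
          hgc.2.1 _ (pre_mem t ht).1, pre_len t ht] at this
        omega
      have hctake : c.take t.length = pre t := by
        apply hgi _ (H.isGameTree.1 _ hc t.length) _ (pre_mem t ht).1
        rw [hgc.2.2 _ hc t.length, hgc', List.take_append_of_le_length
          (by rw [hgc.2.1 _ (pre_mem t ht).1, pre_len t ht]),
          List.take_of_length_le (by rw [hgc.2.1 _ (pre_mem t ht).1, pre_len t ht])]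
      set x := (f c).getD t.length 0 with hxdef
      have hfc1 : (f c).length = t.length + 1 := by rw [hfc.2.1 _ hc, hclen]
      have hfcform : f c = t ++ [x] := by
        have := take_succ_getD (f c) 0 (n := t.length) (by omega)
        rw [List.take_of_length_le (by omega)] at this
        rw [this, ← hfc.2.2 _ hc t.length, hctake, (pre_mem t ht).2]
      have hxCf : x ∈ Cf t := by
        show t ++ [x] ∈ Tf
        rw [← hfcform]
        exact ⟨c, hc, rfl⟩
      refine ⟨x, hxCf, ?_⟩
      rw [mt_val t x hxCf]
      have hprec : pre (t ++ [x]) = c := by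
        rw [← hfcform, pre_f c hc]
      rw [hprec, hgc']
      have : (g (pre t)).length = t.length := by
        rw [hgc.2.1 _ (pre_mem t ht).1, pre_len t ht]
      rw [← this, getD_concat]
  have Cf_fin : ∀ t ∈ Tf, (Cf t).Finite := by
    intro t ht
    apply Set.Finite.subset (hfin.image (fun Q => (f (runPrefix Q (t.length + 1))).getD t.length 0))
    intro x hx
    obtain ⟨hb1, hb2, hb3, -, -⟩ := ext_fact t ht x hx
    obtain ⟨Qb, hQb, hQbpre⟩ := exists_run_through H.isGameTree hb1
    rw [hb3] at hQbpre
    refine ⟨Qb, hQb, ?_⟩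
    show (f (runPrefix Qb (t.length + 1))).getD t.length 0 = x
    rw [hQbpre, hb2]
    exact getD_concat t x
  have Cg_fin : ∀ t ∈ Tf, (Cg t).Finite := by
    intro t ht
    apply Set.Finite.subset (hfin.image (fun Q => (g (runPrefix Q (t.length + 1))).getD t.length 0))
    intro y hy
    obtain ⟨c, hc, hgc'⟩ := hy
    have hclen : c.length = t.length + 1 := by
      have : (g c).length = c.length := hgc.2.1 _ hc
      rw [hgc', List.length_append, List.length_singleton,
        hgc.2.1 _ (pre_mem t ht).1, pre_len t ht] at this
      omega
    obtain ⟨Qc, hQc, hQcpre⟩ := exists_run_through H.isGameTree hc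
    rw [hclen] at hQcpre
    refine ⟨Qc, hQc, ?_⟩
    show (g (runPrefix Qc (t.length + 1))).getD t.length 0 = y
    rw [hQcpre, hgc']
    have hl : (g (pre t)).length = t.length := by
      rw [hgc.2.1 _ (pre_mem t ht).1, pre_len t ht]
    rw [← hl, getD_concat]
  -- choose the permutations
  have hperm : ∀ t : List ℕ, ∃ π : Equiv.Perm ℕ,
      (t ∈ Tf → ∀ x ∈ Cf t, π x = mt t x) ∧ (t ∉ Tf → π = 1) := by
    intro t
    by_cases ht : t ∈ Tf
    · obtain ⟨π, hπ⟩ := permExtend (Cf_fin t ht) (Cg_fin t ht) (mt_bij t ht)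
      exact ⟨π, fun _ => hπ, fun h => absurd ht h⟩
    · exact ⟨1, fun h => absurd h ht, fun _ => rfl⟩
  choose π hπ using hperm
  set φ : List ℕ → List ℕ := phiOf π with hφdef
  -- φ ∘ f = g on the tree
  have key : ∀ (n : ℕ), ∀ a ∈ H.tree, a.length = n → φ (f a) = g a := by
    intro n
    induction n with
    | zero =>
      intro a ha hlen
      have hanil : a = [] := List.length_eq_zero_iff.mp hlen
      subst hanil
      have h1 : f [] = [] := List.length_eq_zero_iff.mp ((hfc.2.1 _ ha).trans rfl)
      have h2 : g [] = [] := List.length_eq_zero_iff.mp ((hgc.2.1 _ ha).trans rfl)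
      rw [h1, h2, hφdef, phiOf_nil]
    | succ n ih =>
      intro a ha hlen
      set a' := a.take n with ha'def
      have ha' : a' ∈ H.tree := H.isGameTree.1 _ ha n
      have ha'len : a'.length = n := by rw [ha'def, List.length_take]; omega
      have hfa'len : (f a').length = n := by rw [hfc.2.1 _ ha', ha'len]
      have hfalen : (f a).length = n + 1 := by rw [hfc.2.1 _ ha, hlen]
      set w := (f a).getD n 0 with hwdef
      have hfform : f a = f a' ++ [w] := by
        have := take_succ_getD (f a) 0 (n := n) (by omega)
        rw [List.take_of_length_le (by omega), ← hfc.2.2 _ ha n] at this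
        exact this
      have hgalen : (g a).length = n + 1 := by rw [hgc.2.1 _ ha, hlen]
      have hga'len : (g a').length = n := by rw [hgc.2.1 _ ha', ha'len]
      have hgform : g a = g a' ++ [(g a).getD n 0] := by
        have := take_succ_getD (g a) 0 (n := n) (by omega)
        rw [List.take_of_length_le (by omega), ← hgc.2.2 _ ha n] at this
        exact this
      have hfa'Tf : f a' ∈ Tf := ⟨a', ha', rfl⟩
      have hwCf : w ∈ Cf (f a') := by
        show f a' ++ [w] ∈ Tf
        rw [← hfform]
        exact ⟨a, ha, rfl⟩
      have hπval : π (f a') w = (g a).getD n 0 := by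
        rw [(hπ (f a')).1 hfa'Tf w hwCf, mt_val _ _ hwCf]
        have hpre' : pre (f a' ++ [w]) = a := by rw [← hfform, pre_f a ha]
        rw [hpre', hfa'len]
      rw [hfform, hφdef, phiOf_concat, ← hφdef, ih a' ha' ha'len, hπval, ← hgform]
  -- value of induced map on runs
  have sval : ∀ (R S : ℕ → ℕ), BarMapsTo φ R S → ∀ n, S n = π (runPrefix R n) (R n) := by
    intro R S hS n
    have h1 := hS (n + 1)
    rw [runPrefix_succ, runPrefix_succ, hS n, hφdef, phiOf_concat] at h1
    have := List.append_inj' h1 rfl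
    simpa using this.2
  -- Tf is prefix-closed
  have Tf_take : ∀ t ∈ Tf, ∀ k, t.take k ∈ Tf := by
    rintro t ⟨a, ha, rfl⟩ k
    exact ⟨a.take k, H.isGameTree.1 _ ha k, hfc.2.2 _ ha k⟩
  -- payoff preservation
  have payoff_pres : ∀ (R S : ℕ → ℕ), BarMapsTo φ R S → (R ∈ c00 ↔ S ∈ c00) := by
    intro R S hS
    by_cases hall : ∀ n, runPrefix R n ∈ Tf
    · set t : ℕ → List M := fun n => pre (runPrefix R n) with htdef
      have htm : ∀ n, t n ∈ H.tree ∧ f (t n) = runPrefix R n := fun n => pre_mem _ (hall n)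
      have hlent : ∀ n, (t n).length = n := by
        intro n
        rw [htdef]
        have := pre_len _ (hall n)
        rw [runPrefix_length] at this
        exact this
      have hcoh : ∀ n, (t (n + 1)).take n = t n := by
        intro n
        apply hfi _ (H.isGameTree.1 _ (htm (n+1)).1 n) _ (htm n).1
        rw [hfc.2.2 _ (htm (n+1)).1 n, (htm (n+1)).2, (htm n).2,
          runPrefix_take _ _ _ (by omega)]
      have hne : t 1 ≠ [] := by
        intro h
        have := hlent 1
        rw [h] at this
        simp at this
      obtain ⟨junk, -⟩ := List.exists_mem_of_ne_nil _ hne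
      set Q : ℕ → M := fun n => (t (n + 1)).getD n junk with hQdef
      have hQpre : ∀ n, runPrefix Q n = t n := by
        intro n
        induction n with
        | zero => rw [runPrefix_zero]; exact (List.length_eq_zero_iff.mp (hlent 0)).symm
        | succ n ihn =>
          rw [runPrefix_succ, ihn]
          have := take_succ_getD (t (n+1)) junk (n := n) (by rw [hlent]; omega)
          rw [List.take_of_length_le (by rw [hlent]), hcoh n] at this
          exact this.symm
      have hQruns : Q ∈ Runs H.tree := fun n => hQpre n ▸ (htm n).1
      have hQf : BarMapsTo f Q R := by
        intro n
        rw [hQpre n, (htm n).2]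
      have hQg : BarMapsTo g Q S := by
        intro n
        rw [hS n, hQpre n, ← (htm n).2, key n (t n) (htm n).1 (hlent n)]
      exact (hfp Q hQruns R hQf).symm.trans (hgp Q hQruns S hQg)
    · push_neg at hall
      obtain ⟨n₀, hn₀⟩ := hall
      have hout : ∀ n, n₀ ≤ n → runPrefix R n ∉ Tf := by
        intro n hn h
        exact hn₀ (by rw [← runPrefix_take R n n₀ hn]; exact Tf_take _ h n₀)
      have hSR : ∀ n, n₀ ≤ n → S n = R n := by
        intro n hn
        rw [sval R S hS n, (hπ (runPrefix R n)).2 (hout n hn)]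
        rfl
      constructor
      · rintro ⟨N, hN⟩
        exact ⟨max N n₀, fun n hn => by
          rw [hSR n (le_trans (le_max_right _ _) hn)]
          exact hN n (le_trans (le_max_left _ _) hn)⟩
      · rintro ⟨N, hN⟩
        exact ⟨max N n₀, fun n hn => by
          rw [← hSR n (le_trans (le_max_right _ _) hn)]
          exact hN n (le_trans (le_max_left _ _) hn)⟩
  refine ⟨φ, ⟨⟨⟨fun _ _ => trivial, fun t _ => phiOf_length π t, fun t _ k => phiOf_take π t k⟩,
    fun t _ s _ h => phiOf_injective π h, fun R _ S hS => payoff_pres R S hS⟩,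
    fun s _ => ⟨(phiOf_surjective π s).choose, trivial, (phiOf_surjective π s).choose_spec⟩⟩,
    fun t ht => key t.length t ht rfl⟩


/-! ### c00 facts -/

theorem c00_countable : c00.Countable := by
  apply Set.Countable.mono _ (Set.countable_range (fun l : List ℕ => fun n => l.getD n 0))
  rintro R ⟨N, hN⟩
  refine ⟨runPrefix R N, ?_⟩
  funext n
  show (runPrefix R N).getD n 0 = R n
  rcases lt_or_ge n N with h | h
  · rw [List.getD_eq_getElem _ _ (by rw [runPrefix_length]; omega), runPrefix_getElem R N n h]
  · rw [List.getD_eq_default _ _ (by rw [runPrefix_length]; omega)]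
    exact (hN n h).symm

theorem getD_mem_c00 (sl : List ℕ) : (fun n => sl.getD n 0) ∈ c00 :=
  ⟨sl.length, fun n hn => List.getD_eq_default _ _ hn⟩

theorem zero_mem_c00 : (fun _ => 0) ∈ c00 := ⟨0, fun _ _ => rfl⟩

theorem runs_GFL (S : ℕ → ℕ) : S ∈ Runs GFL.tree := fun _ => trivial

/-! ### Lifting games to higher universes -/

theorem runPrefix_map {M₁ : Type u} {M₂ : Type v} (F : M₁ → M₂) (R : ℕ → M₁) (n : ℕ) :
    (runPrefix R n).map F = runPrefix (fun i => F (R i)) n := by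
  simp [runPrefix, Function.comp]

def liftGame (K : Game ℕ) : Game (ULift.{x} ℕ) where
  tree := {l | l.map ULift.down ∈ K.tree}
  isGameTree := by
    constructor
    · intro t ht k
      show (t.take k).map ULift.down ∈ K.tree
      rw [List.map_take]
      exact K.isGameTree.1 _ ht k
    · intro t ht
      obtain ⟨y, hy⟩ := K.isGameTree.2 _ ht
      refine ⟨ULift.up y, ?_⟩
      show (t ++ [ULift.up y]).map ULift.down ∈ K.tree
      rw [List.map_append]
      exact hy
  payoff := {R | (fun n => (R n).down) ∈ K.payoff}
  payoff_subset := by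
    intro R hR n
    show (runPrefix R n).map ULift.down ∈ K.tree
    rw [runPrefix_map]
    exact K.payoff_subset hR n

theorem liftGame_isFin {K : Game ℕ} (hK : K.IsFin) : (liftGame.{x} K).IsFin := by
  apply Set.Finite.subset (hK.image (fun R => fun n => ULift.up.{x} (R n)))
  intro R hR
  refine ⟨fun n => (R n).down, ?_, ?_⟩
  · intro n
    have h3 : (runPrefix R n).map ULift.down ∈ K.tree := hR n
    rwa [runPrefix_map] at h3
  · funext n; rfl

theorem liftGame_iso (K : Game ℕ) :
    IsGameIso (liftGame.{x} K) K (List.map ULift.down) := by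
  refine ⟨⟨⟨fun t ht => ht, fun t _ => List.length_map _, fun t _ k => (List.map_take)⟩,
      ?_, ?_⟩, ?_⟩
  · intro t _ st _ h
    exact List.map_injective_iff.mpr ULift.down_injective h
  · intro R hR S hS
    have hSeq : S = fun n => (R n).down := by
      apply eq_of_runPrefix_eq
      intro n
      rw [hS n, runPrefix_map]
    rw [hSeq]
    exact Iff.rfl
  · intro sl hsl
    have hcomp : ∀ l : List ℕ, (l.map ULift.up).map (ULift.down.{x}) = l := by
      intro l
      rw [List.map_map]
      have : (ULift.down.{x} ∘ ULift.up) = (id : ℕ → ℕ) := rfl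
      rw [this, List.map_id]
    refine ⟨sl.map ULift.up, ?_, ?_⟩
    · show (sl.map ULift.up).map ULift.down ∈ K.tree
      rw [hcomp]
      exact hsl
    · exact hcomp sl

/-! ### The forward and backward extension steps -/

theorem fwd_step {N : Type v} (G : Game N)
    {F : Set (ℕ → N)} (hFfin : F.Finite)
    {f : List N → List ℕ} (hf : IsGameEmbedding (gameOf G F) GFL f)
    {R' : ℕ → N} :
    ∃ f' : List N → List ℕ, IsGameEmbedding (gameOf G (F ∪ {R'})) GFL f' ∧
      ∀ t ∈ treeOf F, f' t = f t := by
  obtain ⟨e, he⟩ := GFL_universal (gameOf G (F ∪ {R'}))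
    (gameOf_isFin G (hFfin.union (Set.finite_singleton R')))
  have hsub : (gameOf G F).Sub (gameOf G (F ∪ {R'})) := gameOf_mono_sub G Set.subset_union_left
  have he0 : IsGameEmbedding (gameOf G F) GFL e := emb_of_sub_left hsub he
  obtain ⟨w, hw, hwe⟩ := GFL_ultrahom (gameOf G F) (gameOf_isFin G hFfin) e f he0 hf
  exact ⟨fun l => w (e l), he.comp hw.1, fun t ht => hwe t ht⟩

theorem bwd_step {N : Type v} (G : Game N)
    (huniv : ∀ (M : Type u) (H : Game M), H.IsFin → ∃ h : List M → List N, IsGameEmbedding H G h)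
    (hult : UltrahomFinGames.{u, v} G)
    {F : Set (ℕ → N)} (hFfin : F.Finite) (hFsub : F ⊆ Runs G.tree)
    {f : List N → List ℕ} (hf : IsGameEmbedding (gameOf G F) GFL f)
    (S' : ℕ → ℕ) :
    ∃ (F' : Set (ℕ → N)) (f' : List N → List ℕ), F ⊆ F' ∧ F'.Finite ∧ F' ⊆ Runs G.tree ∧
      IsGameEmbedding (gameOf G F') GFL f' ∧ (∀ t ∈ treeOf F, f' t = f t) ∧
      ∃ R' ∈ F', BarMapsTo f' R' S' := by
  classical
  have hco := corestrict hf
  set E : Set (ℕ → ℕ) := barImage f '' Runs (gameOf G F).tree with hEdef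
  have hErw : Runs (gameOf G F).tree = F := runs_treeOf hFfin
  have hEfin : E.Finite := by
    rw [hEdef, hErw]
    exact hFfin.image _
  set E' : Set (ℕ → ℕ) := E ∪ {S'} with hE'def
  have hE'fin : E'.Finite := hEfin.union (Set.finite_singleton S')
  obtain ⟨ψ, hψiso, hψf, hfψ⟩ := iso_inv hco
  have hψemb : IsGameEmbedding (gameOf GFL E) G ψ := emb_of_sub_right (gameOf_sub G hFsub) hψiso.1
  have hKfin : (gameOf GFL E').IsFin := gameOf_isFin GFL hE'fin
  obtain ⟨e₁, he₁⟩ := huniv (ULift.{u} ℕ) (liftGame (gameOf GFL E')) (liftGame_isFin hKfin)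
  obtain ⟨dinv, hdinviso, hddown, hdownd⟩ := iso_inv (liftGame_iso.{u} (gameOf GFL E'))
  have h₀ : IsGameEmbedding (gameOf GFL E') G (fun l => e₁ (dinv l)) := hdinviso.1.comp he₁
  have hsubE : (gameOf GFL E).Sub (gameOf GFL E') := gameOf_mono_sub GFL Set.subset_union_left
  have h₀E : IsGameEmbedding (gameOf GFL E) G (fun l => e₁ (dinv l)) := emb_of_sub_left hsubE h₀
  have ha : IsGameEmbedding (liftGame.{u} (gameOf GFL E)) G
      (fun l => e₁ (dinv (l.map ULift.down))) := (liftGame_iso.{u} (gameOf GFL E)).1.comp h₀E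
  have hb : IsGameEmbedding (liftGame.{u} (gameOf GFL E)) G
      (fun l => ψ (l.map ULift.down)) := (liftGame_iso.{u} (gameOf GFL E)).1.comp hψemb
  obtain ⟨w, hwiso, hw⟩ := hult (ULift.{u} ℕ) (liftGame.{u} (gameOf GFL E))
    (liftGame_isFin (gameOf_isFin GFL hEfin)) _ _ ha hb
  have hcomp : ∀ l : List ℕ, (l.map ULift.up).map (ULift.down.{u}) = l := by
    intro l
    rw [List.map_map]
    have : (ULift.down.{u} ∘ ULift.up) = (id : ℕ → ℕ) := rfl
    rw [this, List.map_id]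
  have hw' : ∀ s ∈ treeOf E, w (e₁ (dinv s)) = ψ s := by
    intro s hs
    have hmem : (s.map ULift.up) ∈ (liftGame.{u} (gameOf GFL E)).tree := by
      show (s.map ULift.up).map ULift.down ∈ (gameOf GFL E).tree
      rw [hcomp]
      exact hs
    have h2 := hw _ hmem
    rw [hcomp] at h2
    exact h2
  set h' : List ℕ → List N := fun l => w (e₁ (dinv l)) with hh'def
  have hh' : IsGameEmbedding (gameOf GFL E') G h' := h₀.comp hwiso.1
  haveI : Nonempty N := by
    have h0 : ([] : List ℕ) ∈ (gameOf GFL E').tree :=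
      ⟨S', Or.inr rfl, rfl⟩
    rcases G.isGameTree.2 _ (hh'.1.1 _ h0) with ⟨xx, -⟩
    exact ⟨xx⟩
  have hcor := corestrict hh'
  set F' : Set (ℕ → N) := barImage h' '' Runs (gameOf GFL E').tree with hF'def
  have hrunsE' : Runs (gameOf GFL E').tree = E' := runs_treeOf hE'fin
  have hF'fin : F'.Finite := by
    rw [hF'def, hrunsE']
    exact hE'fin.image _
  have hF'sub : F' ⊆ Runs G.tree := by
    rintro R ⟨Q, hQ, rfl⟩
    exact barMapsTo_mem_runs hh'.1 hQ (barImage_barMapsTo hh'.1 hQ)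
  -- h' agrees with ψ on treeOf E
  have hh'ψ : ∀ s ∈ treeOf E, h' s = ψ s := hw'
  -- F ⊆ F'
  have hFF' : F ⊆ F' := by
    intro R hR
    have hRrunsF : R ∈ Runs (gameOf G F).tree := by rw [hErw]; exact hR
    set Q := barImage f R with hQdef
    have hQE : Q ∈ E := ⟨R, hRrunsF, rfl⟩
    have hQruns : Q ∈ Runs (gameOf GFL E').tree := by
      rw [hrunsE']; exact Or.inl hQE
    refine ⟨Q, hQruns, ?_⟩
    have hbm1 : BarMapsTo f R Q := barImage_barMapsTo hf.1 hRrunsF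
    have hbm2 : BarMapsTo h' Q R := by
      intro n
      have hmemE : runPrefix Q n ∈ treeOf E := subset_runs_treeOf _ hQE n
      rw [hh'ψ _ hmemE, hbm1 n]
      exact (hψf _ (hRrunsF n)).symm
    exact barMapsTo_unique (barImage_barMapsTo hh'.1 hQruns) hbm2
  obtain ⟨f', hf'iso, hf'h', hh'f'⟩ := iso_inv hcor
  have hf'emb : IsGameEmbedding (gameOf G F') GFL f' :=
    emb_of_sub_right (gameOf_sub GFL (fun S _ => runs_GFL S)) hf'iso.1
  refine ⟨F', f', hFF', hF'fin, hF'sub, hf'emb, ?_, ?_⟩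
  · -- extends f
    intro t ht
    have htF : t ∈ (gameOf G F).tree := ht
    have hftE : f t ∈ treeOf E := hco.1.1.1 _ htF
    have h1 : h' (f t) = t := by
      rw [hh'ψ _ hftE]
      exact hψf t htF
    have hftE' : f t ∈ (gameOf GFL E').tree := treeOf_mono Set.subset_union_left hftE
    have := hf'h' (f t) hftE'
    rw [h1] at this
    exact this
  · -- fulfillment
    have hS'runs : S' ∈ Runs (gameOf GFL E').tree := by
      rw [hrunsE']; exact Or.inr rfl
    refine ⟨barImage h' S', ⟨S', hS'runs, rfl⟩, ?_⟩
    intro n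
    have h1 : runPrefix (barImage h' S') n = h' (runPrefix S' n) :=
      barImage_barMapsTo hh'.1 hS'runs n
    rw [h1, hf'h' _ (hS'runs n)]


/-! ### The trivial finite game and its consequences -/

def trivGame : Game PUnit.{u+1} where
  tree := Set.univ
  isGameTree := ⟨fun _ _ _ => trivial, fun _ _ => ⟨PUnit.unit, trivial⟩⟩
  payoff := ∅
  payoff_subset := Set.empty_subset _

theorem trivGame_isFin : (trivGame.{u}).IsFin := by
  haveI : Subsingleton (ℕ → PUnit.{u+1}) := ⟨fun a b => funext fun n => Subsingleton.elim _ _⟩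
  haveI : Finite (ℕ → PUnit.{u+1}) := Finite.of_subsingleton
  exact Set.toFinite _

theorem emb0 {N : Type v} (G : Game N) : IsGameEmbedding (gameOf G ∅) GFL (fun _ => []) := by
  have hempty : ∀ t : List N, t ∈ treeOf (∅ : Set (ℕ → N)) → False := by
    rintro t ⟨R, hR, -⟩
    exact Set.notMem_empty R hR
  refine ⟨⟨fun t ht => absurd ht (by intro h; exact hempty t h),
    fun t ht => absurd ht (by intro h; exact hempty t h),
    fun t ht => absurd ht (by intro h; exact hempty t h)⟩,
    fun t ht => absurd ht (by intro h; exact hempty t h), ?_⟩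
  intro R hR
  exact absurd (hR 0) (by intro h; exact hempty _ h)

/-- The main uniqueness statement. -/
theorem main_unique {N : Type v} (G : Game N)
    (hTc : G.tree.Countable) (hPc : G.payoff.Countable)
    (huniv : ∀ (M : Type u) (H : Game M), H.IsFin → ∃ f : List M → List N, IsGameEmbedding H G f)
    (hult : UltrahomFinGames.{u, v} G) :
    ∃ φ : List N → List ℕ, IsGameIso G GFL φ := by
  classical
  -- the tree of G is nonempty
  obtain ⟨h₀, hh₀⟩ := huniv PUnit.{u+1} trivGame trivGame_isFin
  have h0nil : h₀ [] = [] := List.length_eq_zero_iff.mp ((hh₀.1.2.1 [] trivial).trans rfl)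
  have h0mem : ([] : List N) ∈ G.tree := h0nil ▸ hh₀.1.1 [] trivial
  obtain ⟨x0, -⟩ := G.isGameTree.2 [] h0mem
  haveI : Nonempty N := ⟨x0⟩
  -- enumerations
  obtain ⟨eT, heT⟩ := hTc.exists_eq_range ⟨[], h0mem⟩
  have heTmem : ∀ k, eT k ∈ G.tree := by
    intro k; rw [heT]; exact Set.mem_range_self k
  have hrt : ∀ k : ℕ, ∃ R ∈ Runs G.tree, runPrefix R (eT k).length = eT k :=
    fun k => exists_run_through G.isGameTree (heTmem k)
  choose rt hrt1 hrt2 using hrt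
  obtain ⟨eP, heP⟩ := (hPc.union (Set.countable_singleton (rt 0))).exists_eq_range
    ⟨rt 0, Or.inr rfl⟩
  have hePruns : ∀ k, eP k ∈ Runs G.tree := by
    intro k
    have : eP k ∈ G.payoff ∪ {rt 0} := by rw [heP]; exact Set.mem_range_self k
    rcases this with h | h
    · exact G.payoff_subset h
    · rw [h]; exact hrt1 0
  have hePcov : ∀ R ∈ G.payoff, ∃ k, eP k = R := by
    intro R hR
    have : R ∈ G.payoff ∪ {rt 0} := Or.inl hR
    rw [heP] at this
    obtain ⟨k, hk⟩ := this
    exact ⟨k, hk⟩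
  obtain ⟨eS, heS⟩ := c00_countable.exists_eq_range ⟨_, zero_mem_c00⟩
  have heScov : ∀ S ∈ c00, ∃ k, eS k = S := by
    intro S hS
    rw [heS] at hS
    obtain ⟨k, hk⟩ := hS
    exact ⟨k, hk⟩
  set eF : ℕ → (ℕ → N) := fun k => if k % 2 = 0 then eP (k / 2) else rt (k / 2) with heFdef
  have heFruns : ∀ k, eF k ∈ Runs G.tree := by
    intro k
    rw [heFdef]
    by_cases h : k % 2 = 0
    · simp only [if_pos h]; exact hePruns _
    · simp only [if_neg h]; exact hrt1 _
  -- the recursion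
  set Cond : ℕ → (Σ' (F : Set (ℕ → N)) (f : List N → List ℕ),
      (F.Finite ∧ F ⊆ Runs G.tree) ∧ IsGameEmbedding (gameOf G F) GFL f) → Prop :=
    fun n q => if n % 2 = 0 then eF (n / 2) ∈ q.1
      else ∃ R' ∈ q.1, BarMapsTo q.2.1 R' (eS (n / 2)) with hConddef
  have stepEx : ∀ (p : Σ' (F : Set (ℕ → N)) (f : List N → List ℕ),
      (F.Finite ∧ F ⊆ Runs G.tree) ∧ IsGameEmbedding (gameOf G F) GFL f) (n : ℕ),
      ∃ q : Σ' (F : Set (ℕ → N)) (f : List N → List ℕ),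
        (F.Finite ∧ F ⊆ Runs G.tree) ∧ IsGameEmbedding (gameOf G F) GFL f,
        (p.1 ⊆ q.1 ∧ ∀ t ∈ treeOf p.1, q.2.1 t = p.2.1 t) ∧ Cond n q := by
    rintro ⟨F, f, ⟨hFfin, hFsub⟩, hfemb⟩ n
    by_cases hn : n % 2 = 0
    · obtain ⟨f', hf'emb, hf'ext⟩ := fwd_step G hFfin hfemb (R' := eF (n / 2))
      refine ⟨⟨F ∪ {eF (n / 2)}, f', ⟨hFfin.union (Set.finite_singleton _), ?_⟩, hf'emb⟩,
        ⟨Set.subset_union_left, hf'ext⟩, ?_⟩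
      · rintro R (hR | hR)
        · exact hFsub hR
        · rw [hR]; exact heFruns _
      · rw [hConddef]
        simp only [if_pos hn]
        exact Or.inr rfl
    · obtain ⟨F', f', hFF', hF'fin, hF'sub, hf'emb, hf'ext, hR', hR'F, hR'bm⟩ :=
        bwd_step G huniv hult hFfin hFsub hfemb (eS (n / 2))
      refine ⟨⟨F', f', ⟨hF'fin, hF'sub⟩, hf'emb⟩, ⟨hFF', hf'ext⟩, ?_⟩
      rw [hConddef]
      simp only [if_neg hn]
      exact ⟨hR', hR'F, hR'bm⟩
  set Q : ℕ → (Σ' (F : Set (ℕ → N)) (f : List N → List ℕ),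
      (F.Finite ∧ F ⊆ Runs G.tree) ∧ IsGameEmbedding (gameOf G F) GFL f) :=
    fun n => Nat.rec ⟨∅, fun _ => [], ⟨Set.finite_empty, Set.empty_subset _⟩, emb0 G⟩
      (fun n p => (stepEx p n).choose) n with hQdef
  have hQspec : ∀ n, ((Q n).1 ⊆ (Q (n+1)).1 ∧
      ∀ t ∈ treeOf (Q n).1, (Q (n+1)).2.1 t = (Q n).2.1 t) ∧ Cond n (Q (n+1)) :=
    fun n => (stepEx (Q n) n).choose_spec
  have hmono : ∀ m n, m ≤ n → (Q m).1 ⊆ (Q n).1 := by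
    intro m n hmn
    induction n, hmn using Nat.le_induction with
    | base => exact subset_rfl
    | succ n hmn ih => exact subset_trans ih (hQspec n).1.1
  have hagree : ∀ m n, m ≤ n → ∀ t ∈ treeOf (Q m).1, (Q n).2.1 t = (Q m).2.1 t := by
    intro m n hmn
    induction n, hmn using Nat.le_induction with
    | base => intro t _; rfl
    | succ n hmn ih =>
      intro t ht
      rw [(hQspec n).1.2 t (treeOf_mono (hmono m n hmn) ht), ih t ht]
  set φ : List N → List ℕ := fun t =>
    if h : ∃ n, t ∈ treeOf (Q n).1 then (Q h.choose).2.1 t else [] with hφdef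
  have hφval : ∀ n, ∀ t ∈ treeOf (Q n).1, φ t = (Q n).2.1 t := by
    intro n t ht
    have hex : ∃ m, t ∈ treeOf (Q m).1 := ⟨n, ht⟩
    have h1 : φ t = (Q hex.choose).2.1 t := by rw [hφdef]; simp only [dif_pos hex]
    rcases le_total hex.choose n with h | h
    · rw [h1, ← hagree hex.choose n h t hex.choose_spec]
    · rw [h1, hagree n hex.choose h t ht]
  -- coverage
  have hcovF : ∀ k, eF k ∈ (Q (2 * k + 1)).1 := by
    intro k
    have h := (hQspec (2 * k)).2
    rw [hConddef] at h
    simp only [Nat.mul_mod_right, if_pos] at h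
    have h2 : 2 * k / 2 = k := by omega
    rwa [h2] at h
  have hcovP : ∀ R ∈ G.payoff, ∃ n, R ∈ (Q n).1 := by
    intro R hR
    obtain ⟨k, hk⟩ := hePcov R hR
    refine ⟨2 * (2 * k) + 1, ?_⟩
    have := hcovF (2 * k)
    have h2 : eF (2 * k) = eP k := by
      have e1 : (2 * k) % 2 = 0 := by omega
      have e2 : 2 * k / 2 = k := by omega
      rw [heFdef]
      show (if (2 * k) % 2 = 0 then eP (2 * k / 2) else rt (2 * k / 2)) = eP k
      rw [if_pos e1, e2]
    rwa [h2, hk] at this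
  have hcovT : ∀ t ∈ G.tree, ∃ n, t ∈ treeOf (Q n).1 := by
    intro t ht
    rw [heT] at ht
    obtain ⟨k, hk⟩ := ht
    refine ⟨2 * (2 * k + 1) + 1, ?_⟩
    have h1 := hcovF (2 * k + 1)
    have h2 : eF (2 * k + 1) = rt k := by
      have e1 : (2 * k + 1) % 2 ≠ 0 := by omega
      have e2 : (2 * k + 1) / 2 = k := by omega
      rw [heFdef]
      show (if (2 * k + 1) % 2 = 0 then eP ((2 * k + 1) / 2) else rt ((2 * k + 1) / 2)) = rt k
      rw [if_neg e1, e2]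
    rw [h2] at h1
    have := runPrefix_mem_treeOf h1 (eT k).length
    rwa [hrt2 k, hk] at this
  have hcovS : ∀ S ∈ c00, ∃ n, ∃ R' ∈ (Q n).1, BarMapsTo (Q n).2.1 R' S := by
    intro S hS
    obtain ⟨k, hk⟩ := heScov S hS
    refine ⟨2 * k + 1 + 1, ?_⟩
    have h := (hQspec (2 * k + 1)).2
    rw [hConddef] at h
    have h3 : (2 * k + 1) % 2 ≠ 0 := by omega
    simp only [if_neg h3] at h
    have h2 : (2 * k + 1) / 2 = k := by omega
    rw [h2, hk] at h
    exact h
  -- membership lemmas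
  have hQsub : ∀ n, treeOf (Q n).1 ⊆ G.tree := by
    intro n t ht
    exact (gameOf_sub G (Q n).2.2.1.2).1 ht
  have hQemb : ∀ n, IsGameEmbedding (gameOf G (Q n).1) GFL (Q n).2.1 := fun n => (Q n).2.2.2
  -- injectivity of φ on the tree
  have hinj : ∀ t ∈ G.tree, ∀ s ∈ G.tree, φ t = φ s → t = s := by
    intro t ht s hs h
    obtain ⟨n₁, hn₁⟩ := hcovT t ht
    obtain ⟨n₂, hn₂⟩ := hcovT s hs
    have ht' : t ∈ treeOf (Q (max n₁ n₂)).1 := treeOf_mono (hmono n₁ _ (le_max_left _ _)) hn₁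
    have hs' : s ∈ treeOf (Q (max n₁ n₂)).1 := treeOf_mono (hmono n₂ _ (le_max_right _ _)) hn₂
    rw [hφval _ t ht', hφval _ s hs'] at h
    exact (hQemb (max n₁ n₂)).2.1 t ht' s hs' h
  refine ⟨φ, ⟨⟨fun _ _ => trivial, ?_, ?_⟩, hinj, ?_⟩, ?_⟩
  · -- lengths
    intro t ht
    obtain ⟨n, hn⟩ := hcovT t ht
    rw [hφval n t hn]
    exact (hQemb n).1.2.1 t hn
  · -- takes
    intro t ht k
    obtain ⟨n, hn⟩ := hcovT t ht
    have hnk : t.take k ∈ treeOf (Q n).1 := (treeOf_isGameTree (Q n).1).1 t hn k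
    rw [hφval n t hn, hφval n _ hnk]
    exact (hQemb n).1.2.2 t hn k
  · -- payoffs
    intro R hR S hS
    constructor
    · intro hRp
      obtain ⟨n, hn⟩ := hcovP R hRp
      have hRruns : R ∈ Runs (treeOf (Q n).1) := subset_runs_treeOf _ hn
      have hbm : BarMapsTo (Q n).2.1 R S := by
        intro k
        rw [hS k, hφval n _ (hRruns k)]
      exact ((hQemb n).2.2 R hRruns S hbm).mp ⟨hRp, hRruns⟩
    · intro hSp
      obtain ⟨n, R', hR'mem, hbm⟩ := hcovS S hSp
      have hR'runs : R' ∈ Runs (treeOf (Q n).1) := subset_runs_treeOf _ hR'mem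
      have hRR' : R = R' := by
        apply eq_of_runPrefix_eq
        intro k
        apply hinj _ (hR k) _ (hQsub n (hR'runs k))
        rw [← hS k, hφval n _ (hR'runs k), hbm k]
      have := ((hQemb n).2.2 R' hR'runs S hbm).mpr hSp
      rw [hRR']
      exact this.1
  · -- surjectivity
    intro sl _
    obtain ⟨n, R', hR'mem, hbm⟩ := hcovS (fun i => sl.getD i 0) (getD_mem_c00 sl)
    have hR'runs : R' ∈ Runs (treeOf (Q n).1) := subset_runs_treeOf _ hR'mem
    refine ⟨runPrefix R' sl.length, hQsub n (hR'runs sl.length), ?_⟩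
    rw [hφval n _ (hR'runs sl.length), ← hbm sl.length, runPrefix_getD]


/-- `G_FL` is the unique (up to isomorphism) countable game containing
a copy of every finite game which is ultrahomogeneous w.r.t. `(emb, FinGame)`. -/
theorem GFL_unique_countable_universal_ultrahomogeneous :
    (GFL.tree.Countable ∧ GFL.payoff.Countable ∧
      (∀ (M : Type u) (H : Game M), H.IsFin →
        ∃ f : List M → List ℕ, IsGameEmbedding H GFL f) ∧
      UltrahomFinGames.{u, 0} GFL) ∧
    ∀ (N : Type v) (G : Game N),
      G.tree.Countable → G.payoff.Countable →
      (∀ (M : Type u) (H : Game M), H.IsFin →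
        ∃ f : List M → List N, IsGameEmbedding H G f) →
      UltrahomFinGames.{u, v} G →
      ∃ φ : List N → List ℕ, IsGameIso G GFL φ := by
  refine ⟨⟨Set.countable_univ, c00_countable, fun M H hfin => GFL_universal H hfin,
    fun M H hfin f g hf hg => GFL_ultrahom H hfin f g hf hg⟩, ?_⟩
  intro N G hTc hPc huniv hult
  exact main_unique G hTc hPc huniv hult

end FraisseGames
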